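/- Let p be a prime, q = p^ℓ a power of p, and let n, k, d be natural numbers with d ≤ k ≤ n − d such that k is (d,p)-good. Then every degree-d polynomial function f : {0,1}^n_k → Z_q lies in the Z_q-span of the homogeneous degree-d multilinear monomials: there exist coefficients b_T ∈ Z_q, one for each T ⊆ {1,…,n} with |T| = d, such that f(x) = Σ_{|T| = d} b_T · ∏_{i∈T} x_i for all x ∈ {0,1}^n_k. -/
import Mathlib


/-!
STATEMENT 12: For (d,p)-good slices, the homogeneous degree-d multilinear
monomials span: every degree-d polynomial function on the slice {0,1}^n_k
with values in Z_q (q = p^ℓ) is a Z_q-linear combination of monomials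
∏_{i∈T} x_i with |T| = d.
Points of the slice are encoded as `A : Finset (Fin n)` with `A.card = k`.
Writing d = Σ b_j p^j and k = Σ a_j p^j in base p, with ℓ' = Nat.log p d the
index of the leading digit of d, k is (d,p)-good iff k ≥ d, a_j = b_j for
j < ℓ' (equivalently k ≡ d mod p^ℓ') and a_{ℓ'} ≥ b_{ℓ'}.
-/

open Finset

/-- `k` is a `(d,p)`-good slice. -/
def IsGoodSlice (p d k : ℕ) : Prop :=
  d ≤ k ∧
    k % p ^ (Nat.log p d) = d % p ^ (Nat.log p d) ∧
    d / p ^ (Nat.log p d) % p ≤ k / p ^ (Nat.log p d) % p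

lemma mod_le_aux {p a L i : ℕ} (hp : 0 < p) (hLi : L + 1 ≤ i) :
    a % p ^ i ≤ a % p ^ (L + 1) + (p ^ i - p ^ (L + 1)) := by
  have hdvd : p ^ (L + 1) ∣ p ^ i := pow_dvd_pow p hLi
  have h1 : (a % p ^ i) % p ^ (L + 1) = a % p ^ (L + 1) := Nat.mod_mod_of_dvd a hdvd
  set r := a % p ^ i with hrdef
  have hr : r < p ^ i := Nat.mod_lt _ (pow_pos hp i)
  have h2 : p ^ (L + 1) * (r / p ^ (L + 1)) + r % p ^ (L + 1) = r := Nat.div_add_mod r _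
  have hpow : p ^ (i - L - 1) * p ^ (L + 1) = p ^ i := by
    rw [← pow_add]; congr 1; omega
  have h3 : r / p ^ (L + 1) < p ^ (i - L - 1) := by
    rw [Nat.div_lt_iff_lt_mul (pow_pos hp _), hpow]; exact hr
  have h4 : p ^ (L + 1) * (r / p ^ (L + 1)) ≤ p ^ (L + 1) * (p ^ (i - L - 1) - 1) :=
    Nat.mul_le_mul_left _ (by omega)
  have h5 : p ^ (L + 1) * (p ^ (i - L - 1) - 1) = p ^ i - p ^ (L + 1) := by
    rw [Nat.mul_sub_one]
    rw [mul_comm] at hpow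
    omega
  omega

/-- No carries when adding `d - e` and `k - d` in base `p`, for a good slice. -/
lemma good_no_carry {p d k e : ℕ} (hp : p.Prime) (hdk : d ≤ k)
    (h1 : k % p ^ (Nat.log p d) = d % p ^ (Nat.log p d))
    (h2 : d / p ^ (Nat.log p d) % p ≤ k / p ^ (Nat.log p d) % p)
    (he : e ≤ d) (i : ℕ) (hi : 1 ≤ i) :
    (d - e) % p ^ i + (k - d) % p ^ i < p ^ i := by
  set L := Nat.log p d with hL
  have hppos : 0 < p := hp.pos
  have hpipos : 0 < p ^ i := pow_pos hppos i
  have hdvdL : p ^ L ∣ k - d :=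
    Nat.dvd_of_mod_eq_zero (Nat.sub_mod_eq_zero_of_mod_eq h1)
  rcases le_or_gt i L with hiL | hiL
  · obtain ⟨c, hc⟩ := (pow_dvd_pow p hiL).trans hdvdL
    have h0 : (k - d) % p ^ i = 0 := by rw [hc, Nat.mul_mod_right]
    have := Nat.mod_lt (d - e) hpipos
    omega
  rcases Nat.eq_zero_or_pos d with hd0 | hdpos
  · subst hd0
    simp only [Nat.zero_sub, Nat.sub_zero, Nat.zero_mod, zero_add]
    exact Nat.mod_lt _ hpipos
  · -- d ≥ 1, L < i
    have hLi : L + 1 ≤ i := hiL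
    have hd_lt : d < p ^ (L + 1) := Nat.lt_pow_succ_log_self hp.one_lt d
    have hpL1_le : p ^ (L + 1) ≤ p ^ i := Nat.pow_le_pow_right hppos hLi
    have hde : (d - e) % p ^ i = d - e := Nat.mod_eq_of_lt (by omega)
    set B := d / p ^ L with hB
    have hpLpos : 0 < p ^ L := pow_pos hppos L
    have hBp : B < p := by
      rw [hB, Nat.div_lt_iff_lt_mul hpLpos]
      calc d < p ^ (L + 1) := hd_lt
      _ = p ^ L * p := pow_succ p L
      _ = p * p ^ L := mul_comm _ _
    obtain ⟨m, hm⟩ := hdvdL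
    have hkdiv : k / p ^ L = B + m := by
      have hk : k = d + p ^ L * m := by omega
      rw [hk, Nat.add_mul_div_left _ _ hpLpos]
    set s := m % p with hs
    have hsp : s < p := Nat.mod_lt _ hppos
    have hBB : B % p = B := Nat.mod_eq_of_lt hBp
    have h2' : B ≤ (B + m) % p := by rw [← hkdiv, ← hBB]; exact h2
    have h2'' : B ≤ (B + s) % p := by rwa [hs, Nat.add_mod_mod]
    have hsB : s + B + 1 ≤ p := by
      have hq := Nat.div_add_mod (B + s) p
      have hrlt : (B + s) % p < p := Nat.mod_lt _ hppos
      have hq2 : (B + s) / p < 2 := by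
        rw [Nat.div_lt_iff_lt_mul hppos]; omega
      interval_cases h : (B + s) / p <;> omega
    have hmodL1 : (k - d) % p ^ (L + 1) = p ^ L * s := by
      rw [hm, pow_succ, Nat.mul_mod_mul_left]
    have haux : (k - d) % p ^ i ≤ p ^ L * s + (p ^ i - p ^ (L + 1)) := by
      have := mod_le_aux (a := k - d) hppos hLi
      omega
    have hfin : d + p ^ L * s < p ^ (L + 1) := by
      have hmd := Nat.div_add_mod d (p ^ L)
      rw [← hB] at hmd
      have hmlt : d % p ^ L < p ^ L := Nat.mod_lt _ hpLpos
      have hmul : p ^ L * (B + 1 + s) ≤ p ^ L * p := Nat.mul_le_mul_left _ (by omega)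
      have hexp : p ^ L * (B + 1 + s) = p ^ L * B + p ^ L + p ^ L * s := by ring
      have hps : p ^ L * p = p ^ (L + 1) := (pow_succ p L).symm
      omega
    omega

lemma good_not_dvd_choose {p d k e : ℕ} (hp : p.Prime) (hgood : IsGoodSlice p d k)
    (he : e ≤ d) : ¬ p ∣ (k - e).choose (d - e) := by
  obtain ⟨hdk, h1, h2⟩ := hgood
  have hkn : d - e ≤ k - e := Nat.sub_le_sub_right hdk e
  have hmult := hp.emultiplicity_choose hkn (Nat.lt_succ_self (Nat.log p (k - e)))
  have hsub : (k - e) - (d - e) = k - d := by omega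
  have hempty : (Finset.filter
      (fun i => p ^ i ≤ (d - e) % p ^ i + ((k - e) - (d - e)) % p ^ i)
      (Finset.Ico 1 (Nat.log p (k - e) + 1))) = ∅ := by
    rw [Finset.filter_eq_empty_iff]
    intro i hiI
    rw [Finset.mem_Ico] at hiI
    rw [hsub]
    push_neg
    exact good_no_carry hp hdk h1 h2 he i hiI.1
  rw [hempty] at hmult
  simp only [Finset.card_empty, Nat.cast_zero] at hmult
  exact emultiplicity_eq_zero.1 hmult

lemma card_between {n d : ℕ} (A S : Finset (Fin n)) (hSA : S ⊆ A) (hSd : S.card ≤ d) :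
    ((A.powersetCard d).filter (fun T => S ⊆ T)).card
      = (A.card - S.card).choose (d - S.card) := by
  rw [← Finset.card_sdiff_of_subset hSA, ← Finset.card_powersetCard]
  apply Finset.card_bij' (fun T _ => T \ S) (fun U _ => U ∪ S)
  · intro T hT
    rw [Finset.mem_filter, Finset.mem_powersetCard] at hT
    obtain ⟨⟨hTA, hTd⟩, hST⟩ := hT
    rw [Finset.mem_powersetCard]
    refine ⟨Finset.sdiff_subset_sdiff hTA (Finset.Subset.refl S), ?_⟩
    rw [Finset.card_sdiff_of_subset hST, hTd]
  · intro U hU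
    rw [Finset.mem_powersetCard] at hU
    obtain ⟨hUAS, hUcard⟩ := hU
    rw [Finset.mem_filter, Finset.mem_powersetCard]
    have hdisj : Disjoint U S := by
      rw [Finset.disjoint_left]
      intro x hxU
      exact (Finset.mem_sdiff.1 (hUAS hxU)).2
    refine ⟨⟨?_, ?_⟩, Finset.subset_union_right⟩
    · exact Finset.union_subset (hUAS.trans (Finset.sdiff_subset)) hSA
    · rw [Finset.card_union_of_disjoint hdisj, hUcard]
      omega
  · intro T hT
    rw [Finset.mem_filter] at hT
    exact Finset.sdiff_union_of_subset hT.2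
  · intro U hU
    rw [Finset.mem_powersetCard] at hU
    apply Finset.union_sdiff_cancel_right
    rw [Finset.disjoint_left]
    intro x hxU
    exact (Finset.mem_sdiff.1 (hU.1 hxU)).2

theorem homogeneous_spanning_good_slice
    (p l n k d : ℕ) (hp : p.Prime)
    (hdk : d ≤ k) (hkn : k ≤ n - d) (hgood : IsGoodSlice p d k)
    (f : Finset (Fin n) → ZMod (p ^ l))
    (hf : ∃ a : Finset (Fin n) → ZMod (p ^ l), ∀ A : Finset (Fin n), A.card = k →
      f A = ∑ S ∈ Finset.univ.filter (fun S : Finset (Fin n) => S.card ≤ d),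
        (∏ i ∈ S, if i ∈ A then (1 : ℤ) else 0) • a S) :
    ∃ b : {T : Finset (Fin n) // T.card = d} → ZMod (p ^ l),
      ∀ A : Finset (Fin n), A.card = k →
        f A = ∑ T : {T : Finset (Fin n) // T.card = d},
          (∏ i ∈ (T : Finset (Fin n)), if i ∈ A then (1 : ℤ) else 0) • b T := by
  obtain ⟨a, ha⟩ := hf
  set c : ℕ → ZMod (p ^ l) := fun e => (((k - e).choose (d - e) : ℕ) : ZMod (p ^ l))⁻¹ with hc
  refine ⟨fun T => ∑ S ∈ (T : Finset (Fin n)).powerset, c S.card * a S, ?_⟩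
  intro A hA
  rw [ha A hA]
  have hprod : ∀ (S : Finset (Fin n)),
      (∏ i ∈ S, if i ∈ A then (1 : ℤ) else 0) = if S ⊆ A then 1 else 0 := by
    intro S
    by_cases h : S ⊆ A
    · rw [if_pos h]
      exact Finset.prod_eq_one fun i hi => if_pos (h hi)
    · rw [if_neg h]
      obtain ⟨i, hiS, hiA⟩ := Finset.not_subset.1 h
      exact Finset.prod_eq_zero hiS (if_neg hiA)
  have step1 : (∑ T : {T : Finset (Fin n) // T.card = d},
        (∏ i ∈ (T : Finset (Fin n)), if i ∈ A then (1 : ℤ) else 0) •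
          (∑ S ∈ (T : Finset (Fin n)).powerset, c S.card * a S))
      = ∑ T ∈ Finset.univ.filter (fun T : Finset (Fin n) => T.card = d),
        (∏ i ∈ T, if i ∈ A then (1 : ℤ) else 0) •
          (∑ S ∈ T.powerset, c S.card * a S) :=
    (Finset.sum_subtype (p := fun T : Finset (Fin n) => T.card = d)
      (Finset.univ.filter fun T : Finset (Fin n) => T.card = d)
      (fun x => by simp)
      (fun T => (∏ i ∈ T, if i ∈ A then (1 : ℤ) else 0) •
        ∑ S ∈ T.powerset, c S.card * a S)).symm
  rw [step1]
  simp only [hprod, ite_smul, one_smul, zero_smul]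
  rw [← Finset.sum_filter, ← Finset.sum_filter]
  have hset : (Finset.univ.filter (fun T : Finset (Fin n) => T.card = d)).filter
      (fun T => T ⊆ A) = A.powersetCard d := by
    ext T
    simp only [Finset.mem_filter, Finset.mem_univ, true_and, Finset.mem_powersetCard]
    tauto
  have hset2 : (Finset.univ.filter (fun S : Finset (Fin n) => S.card ≤ d)).filter
      (fun S => S ⊆ A) = A.powerset.filter (fun S => S.card ≤ d) := by
    ext S
    simp only [Finset.mem_filter, Finset.mem_univ, true_and, Finset.mem_powerset]
    tauto
  rw [hset, hset2]
  have swap : (∑ T ∈ A.powersetCard d, ∑ S ∈ T.powerset, c S.card * a S)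
      = ∑ S ∈ A.powerset.filter (fun S => S.card ≤ d),
          ∑ T ∈ (A.powersetCard d).filter (fun T => S ⊆ T), c S.card * a S := by
    apply Finset.sum_comm'
    intro T S
    simp only [Finset.mem_powersetCard, Finset.mem_powerset, Finset.mem_filter]
    constructor
    · rintro ⟨⟨hTA, hTd⟩, hST⟩
      exact ⟨⟨⟨hTA, hTd⟩, hST⟩, hST.trans hTA, hTd ▸ Finset.card_le_card hST⟩
    · rintro ⟨⟨⟨hTA, hTd⟩, hST⟩, _, _⟩
      exact ⟨⟨hTA, hTd⟩, hST⟩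
  rw [swap]
  apply Finset.sum_congr rfl
  intro S hS
  rw [Finset.mem_filter, Finset.mem_powerset] at hS
  obtain ⟨hSA, hSd⟩ := hS
  rw [Finset.sum_const, card_between A S hSA hSd, hA, nsmul_eq_mul, hc]
  have hcop : Nat.Coprime ((k - S.card).choose (d - S.card)) (p ^ l) :=
    Nat.Coprime.pow_right l
      (Nat.coprime_comm.1 (hp.coprime_iff_not_dvd.2 (good_not_dvd_choose hp hgood hSd)))
  rw [← mul_assoc, ZMod.coe_mul_inv_eq_one _ hcop, one_mul]
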